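/- arXiv:2206.09759 — 4 statements merged into one kernel-verified Lean document; each statement's English description precedes it below -/
import Mathlib

section
/- Theorem (SC1, zero packet loss for M-TDMA): Consider an N×N switch with periodic time-sensitive flows, where flow f_{i,j} has offset offset_{i,j} ≥ 0 and period T_{i,j} ≥ 1, and the s-th cell of f_{i,j} has lifetime the slot interval [offset_{i,j} + s·T_{i,j}, offset_{i,j} + (s+1)·T_{i,j} - 1]. If T_{i,j} ≥ N for all i,j ∈ [N], then under the M-TDMA policy for any flow decomposition set D = {M_1, ..., M_N}, every cell of every flow is assigned a scheduling slot within its lifetime, and distinct cells of the same flow are scheduled at distinct slots. -/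
/-- `A` is a permutation matrix: binary with exactly one 1 in each row and column. -/
def IsPermMatrix (N : ℕ) (A : Fin N → Fin N → ℕ) : Prop :=
  (∀ i j, A i j = 0 ∨ A i j = 1) ∧ (∀ i, ∑ j, A i j = 1) ∧ (∀ j, ∑ i, A i j = 1)

/-- SC1 (zero packet loss for M-TDMA): if every period T_{i,j} ≥ N, then under M-TDMA
(matching M_{(t mod N)+1} scheduled at slot t) for any flow decomposition set, every
cell s of every flow f_{i,j} is assigned a scheduling slot within its lifetime
[offset + s·T, offset + (s+1)·T - 1], and distinct cells of the same flow get distinct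
slots. -/
theorem stmt10 (N : ℕ) (hN : 0 < N) (M : Fin N → Fin N → Fin N → ℕ)
    (hperm : ∀ k, IsPermMatrix N (M k))
    (hsum : ∀ i j, ∑ k, M k i j = 1)
    (offset T : Fin N → Fin N → ℕ)
    (hT : ∀ i j, N ≤ T i j) :
    ∀ i j : Fin N, ∃ σ : ℕ → ℕ,
      Function.Injective σ ∧
      ∀ s : ℕ,
        offset i j + s * T i j ≤ σ s ∧
        σ s ≤ offset i j + (s + 1) * T i j - 1 ∧
        M ⟨σ s % N, Nat.mod_lt _ hN⟩ i j = 1 := by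
  intro i j
  -- there is a (unique) k with M k i j = 1
  obtain ⟨k, hk⟩ : ∃ k, M k i j = 1 := by
    by_contra h
    push_neg at h
    have hz : ∀ k, M k i j = 0 := fun k => ((hperm k).1 i j).resolve_right (h k)
    have := hsum i j
    rw [Finset.sum_eq_zero (fun k _ => hz k)] at this
    exact absurd this (by norm_num)
  set f : ℕ → ℕ := fun s =>
    offset i j + s * T i j + (k.val + N - (offset i j + s * T i j) % N) % N with hf
  have hmodN : ∀ a : ℕ, a % N < N := fun a => Nat.mod_lt _ hN
  have key : ∀ s : ℕ, f s % N = k.val ∧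
      offset i j + s * T i j ≤ f s ∧ f s ≤ offset i j + s * T i j + N - 1 := by
    intro s
    set a := offset i j + s * T i j with ha
    have hd : (k.val + N - a % N) % N < N := hmodN _
    have hmod : f s % N = k.val := by
      have h1 : f s % N = (a + (k.val + N - a % N)) % N := by
        simp only [hf]
        conv_lhs => rw [Nat.add_mod]
        conv_rhs => rw [Nat.add_mod]
        rw [Nat.mod_mod_of_dvd _ dvd_rfl]
      have hq := Nat.div_add_mod a N
      have hr := hmodN a
      have heq : a + (k.val + N - a % N) = N * (a / N) + (N + k.val) := by omega
      rw [h1, heq, Nat.mul_add_mod, Nat.add_mod_left, Nat.mod_eq_of_lt k.isLt]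
    have hfs : f s = a + (k.val + N - a % N) % N := by simp only [hf, ← ha]
    exact ⟨hmod, by omega, by omega⟩
  refine ⟨f, ?_, ?_⟩
  · have hsm : StrictMono f := by
      apply strictMono_nat_of_lt_succ
      intro s
      obtain ⟨_, h1, h2⟩ := key s
      obtain ⟨_, h3, _⟩ := key (s + 1)
      have hTN := hT i j
      have : (s + 1) * T i j = s * T i j + T i j := by ring
      omega
    exact hsm.injective
  · intro s
    obtain ⟨hmod, h1, h2⟩ := key s
    have hTN := hT i j
    have hst : (s + 1) * T i j = s * T i j + T i j := by ring
    refine ⟨h1, by omega, ?_⟩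
    have : (⟨f s % N, Nat.mod_lt _ hN⟩ : Fin N) = k := Fin.ext hmod
    rw [this]; exact hk
end

section
/- Let T_{i,j} ≥ N, offset_{i,j} ≥ 0, s ≥ 0 be integers, and k ∈ {1, ..., N}. Define q(s) = ⌈(s·T_{i,j} + offset_{i,j} - (k-1)) / N⌉. Then q(s) ≥ 0 and offset_{i,j} + s·T_{i,j} ≤ q(s)·N + (k-1) ≤ offset_{i,j} + (s+1)·T_{i,j} - 1. -/
/-- Core arithmetic lemma for SC1: with T ≥ N, offset ≥ 0, s ≥ 0, 1 ≤ k ≤ N and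
q(s) = ⌈(s·T + offset - (k-1)) / N⌉, we have q(s) ≥ 0 and the slot q(s)·N + (k-1)
lies in the lifetime [offset + s·T, offset + (s+1)·T - 1]. -/
theorem stmt11 (N T offset s k : ℤ)
    (hN : 1 ≤ N) (hT : N ≤ T) (hoff : 0 ≤ offset) (hs : 0 ≤ s)
    (hk1 : 1 ≤ k) (hkN : k ≤ N)
    (q : ℤ) (hq : q = ⌈((s * T + offset - (k - 1) : ℤ) : ℚ) / (N : ℚ)⌉) :
    0 ≤ q ∧
    offset + s * T ≤ q * N + (k - 1) ∧
    q * N + (k - 1) ≤ offset + (s + 1) * T - 1 := by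
  set A : ℤ := s * T + offset - (k - 1) with hA
  have hNQ : (0 : ℚ) < (N : ℚ) := by exact_mod_cast hN
  -- upper bound on A/N ≤ q
  have h1 : ((A : ℚ) / N) ≤ (q : ℚ) := hq ▸ Int.le_ceil _
  have h2 : (q : ℚ) < (A : ℚ) / N + 1 := hq ▸ Int.ceil_lt_add_one _
  have hle : (A : ℚ) ≤ (q : ℚ) * N := by
    have := (div_le_iff₀ hNQ).mp h1
    linarith
  have hlt : (q : ℚ) * N < (A : ℚ) + N := by
    have h3 : (q : ℚ) < ((A : ℚ) + N) / N := by
      rw [add_div, div_self (ne_of_gt hNQ)]; linarith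
    exact (lt_div_iff₀ hNQ).mp h3
  have hleZ : A ≤ q * N := by exact_mod_cast hle
  have hltZ : q * N < A + N := by exact_mod_cast hlt
  have hsT : 0 ≤ s * T := mul_nonneg hs (by linarith)
  refine ⟨?_, by omega, by nlinarith⟩
  nlinarith [hleZ]
end

section
/- Let T_k ≥ 2, T_{i,j} ≥ 2·T_k - 1, offset_{i,j} ≥ 0, s ≥ 0 be integers and q(s) = ⌈(s·T_{i,j} + offset_{i,j}) / T_k⌉. Then (q(s)+1)·T_k - 1 ≤ offset_{i,j} + (s+1)·T_{i,j} - 1, i.e., the deadline of request q(s) of the period-T_k task does not exceed the expiration slot of cell s of flow f_{i,j}. -/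
/-- With T_k ≥ 2, T_{i,j} ≥ 2·T_k - 1, offset ≥ 0, s ≥ 0 and
q(s) = ⌈(s·T_{i,j} + offset) / T_k⌉, the deadline (q(s)+1)·T_k - 1 of request q(s) of
the period-T_k task does not exceed the expiration slot offset + (s+1)·T_{i,j} - 1 of
cell s. -/
theorem stmt15 (Tk Tij offset s : ℤ)
    (hTk : 2 ≤ Tk) (hTij : 2 * Tk - 1 ≤ Tij) (hoff : 0 ≤ offset) (hs : 0 ≤ s)
    (q : ℤ) (hq : q = ⌈((s * Tij + offset : ℤ) : ℚ) / (Tk : ℚ)⌉) :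
    (q + 1) * Tk - 1 ≤ offset + (s + 1) * Tij - 1 := by
  have hTk0 : (0:ℚ) < (Tk:ℚ) := by exact_mod_cast lt_of_lt_of_le (by norm_num) hTk
  have h1 : (q:ℚ) < ((s * Tij + offset : ℤ) : ℚ) / (Tk : ℚ) + 1 := by
    rw [hq]; exact Int.ceil_lt_add_one _
  have h2 : (q:ℚ) * Tk < ((s * Tij + offset : ℤ) : ℚ) + Tk := by
    have := mul_lt_mul_of_pos_right h1 hTk0
    rwa [add_mul, one_mul, div_mul_cancel₀ _ (ne_of_gt hTk0)] at this
  have h3 : q * Tk < s * Tij + offset + Tk := by exact_mod_cast h2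
  nlinarith [h3, hTij, hTk]
end

section
/- Theorem (SC2, zero packet loss for M-EDF, abstract form): Suppose for each k ∈ [N] there is a schedule function a: ℕ → [N] with the property that for every k and every q ≥ 0, there exists a slot t ∈ [q·T_k, (q+1)·T_k - 1] with a(t) = k (i.e., the virtual EDF schedule serves every request of the period-T_k task within its lifetime). Let D = {M_1, ..., M_N} be a flow decomposition set, and suppose each flow f_{i,j} ∈ M_k satisfies either (T_{i,j} = T_k and offset_{i,j} = 0) or (T_{i,j} ≥ 2·T_k - 1 and T_k ≥ 2). Then the policy scheduling matching M_{a(t)} at slot t serves every cell of every flow f_{i,j} within its lifetime [offset_{i,j} + s·T_{i,j}, offset_{i,j} + (s+1)·T_{i,j} - 1]. -/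
/-- SC2 (zero packet loss for M-EDF, abstract form): suppose the virtual schedule
a : ℕ → [N] serves every request of the period-T_k task within its lifetime
[q·T_k, (q+1)·T_k - 1]. If D = {M_1,...,M_N} is a flow decomposition set and every flow
f_{i,j} ∈ M_k satisfies either (T_{i,j} = T_k and offset_{i,j} = 0) or
(T_{i,j} ≥ 2·T_k - 1 and T_k ≥ 2), then the policy scheduling M_{a(t)} at slot t serves
every cell of every flow within its lifetime. -/
theorem stmt16 (N : ℕ) (T : Fin N → ℕ) (hTpos : ∀ k, 1 ≤ T k)
    (a : ℕ → Fin N)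
    (ha : ∀ (k : Fin N) (q : ℕ), ∃ t : ℕ,
      q * T k ≤ t ∧ t ≤ (q + 1) * T k - 1 ∧ a t = k)
    (M : Fin N → Fin N → Fin N → ℕ)
    (hperm : ∀ k, IsPermMatrix N (M k))
    (hsum : ∀ i j, ∑ k, M k i j = 1)
    (offset Tij : Fin N → Fin N → ℕ)
    (hcond : ∀ i j k, M k i j = 1 →
      (Tij i j = T k ∧ offset i j = 0) ∨
      (2 * T k - 1 ≤ Tij i j ∧ 2 ≤ T k)) :
    ∀ (i j : Fin N) (s : ℕ), ∃ t : ℕ,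
      offset i j + s * Tij i j ≤ t ∧
      t ≤ offset i j + (s + 1) * Tij i j - 1 ∧
      M (a t) i j = 1 := by
  intro i j s
  obtain ⟨k, hk⟩ : ∃ k, M k i j = 1 := by
    by_contra h
    push_neg at h
    have h0 : ∀ k, M k i j = 0 := fun k =>
      ((hperm k).1 i j).resolve_right (h k)
    have := hsum i j
    simp [h0] at this
  rcases hcond i j k hk with ⟨hT, hoff⟩ | ⟨hT, hk2⟩
  · obtain ⟨t, h1, h2, h3⟩ := ha k s
    exact ⟨t, by rw [hoff, hT]; simpa using h1,
      by rw [hoff, hT]; simpa using h2, by rw [h3]; exact hk⟩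
  · have hTk := hTpos k
    set L := offset i j + s * Tij i j with hL
    set q := (L + T k - 1) / T k with hq
    obtain ⟨t, h1, h2, h3⟩ := ha k q
    refine ⟨t, ?_, ?_, by rw [h3]; exact hk⟩ <;>
    · have hmod : q * T k + (L + T k - 1) % T k = L + T k - 1 := by
        rw [mul_comm]; exact Nat.div_add_mod _ _
      have hrlt : (L + T k - 1) % T k < T k := Nat.mod_lt _ (by omega)
      have hexp : (q + 1) * T k = q * T k + T k := by ring
      have hexp2 : (s + 1) * Tij i j = s * Tij i j + Tij i j := by ring
      rw [hexp] at h2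
      try rw [hexp2]
      generalize q * T k = QT at h1 h2 hmod
      omega
end
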